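/- For all integers r ≥ 1 and g ≥ 1, the Verlinde number s_{r,1}(g) equals r^g. (This is the statement that the space of sections of the determinant line bundle on SU_X(r) has the same dimension as the space of classical theta functions of level r on the Jacobian of a genus g curve.) -/

import Mathlib

open Finset Real

/-- Zagier's formula for the Verlinde number `s_{r,k}(g)`:
`s_{r,k}(g) = (r/(r+k))^g * Σ_{S ⊆ {1,…,r+k}, |S| = r} Π_{s ∈ S, t ∉ S} |2 sin(π(s−t)/(r+k))|^{g−1}`,
where `T = {1,…,r+k} \ S` is the complement (so `|T| = k`). -/
noncomputable def verlinde (r k g : ℕ) : ℝ :=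
  ((r : ℝ) / (r + k)) ^ g *
    ∑ S ∈ (Finset.Icc 1 (r + k)).powersetCard r,
      ∏ s ∈ S, ∏ t ∈ Finset.Icc 1 (r + k) \ S,
        |2 * Real.sin (Real.pi * ((s : ℝ) - (t : ℝ)) / (r + k))| ^ (g - 1)

lemma abs_one_sub_exp (x : ℝ) :
    ‖1 - Complex.exp (x * Complex.I)‖ = |2 * Real.sin (x / 2)| := by
  have h1 : ‖1 - Complex.exp (x * Complex.I)‖ ^ 2 = |2 * Real.sin (x / 2)| ^ 2 := by
    rw [Complex.sq_norm, sq_abs, Complex.exp_mul_I]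
    simp [Complex.normSq_apply, ← Complex.ofReal_cos, ← Complex.ofReal_sin]
    have h2 : Real.cos (x / 2) ^ 2 = 1 / 2 + Real.cos x / 2 := by
      have := Real.cos_sq (x / 2)
      rwa [show (2 : ℝ) * (x / 2) = x by ring] at this
    have h3 := Real.sin_sq_add_cos_sq (x / 2)
    nlinarith [Real.sin_sq_add_cos_sq x]
  have := congrArg Real.sqrt h1
  rwa [Real.sqrt_sq (norm_nonneg _), Real.sqrt_sq (abs_nonneg _)] at this

lemma prod_sin (n : ℕ) :
    ∏ j ∈ Finset.Icc 1 n, |2 * Real.sin (Real.pi * j / (n + 1))| = (n + 1 : ℝ) := by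
  have hμ := Complex.isPrimitiveRoot_exp (n + 1) (Nat.succ_ne_zero n)
  have h := congrArg (‖·‖) (hμ.prod_one_sub_pow_eq_order)
  rw [norm_prod] at h
  push_cast at h
  have key : ∀ x : ℕ,
      ‖1 - Complex.exp (2 * ↑π * Complex.I / (↑n + 1)) ^ (x + 1)‖
        = |2 * Real.sin (Real.pi * (x + 1) / (n + 1))| := by
    intro x
    rw [← Complex.exp_nat_mul,
      show ((x + 1 : ℕ) : ℂ) * (2 * ↑π * Complex.I / (↑n + 1))
          = ((2 * π * (x + 1) / (n + 1) : ℝ) : ℂ) * Complex.I by push_cast; ring,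
      abs_one_sub_exp]
    congr 2
    ring
  simp only [key] at h
  have habs : ‖(n : ℂ) + 1‖ = (n + 1 : ℝ) := by
    rw [show ((n : ℂ) + 1) = (((n : ℝ) + 1 : ℝ) : ℂ) by push_cast; ring, Complex.norm_real, Real.norm_eq_abs,
      abs_of_nonneg (by positivity)]
  rw [habs] at h
  rw [show Finset.Icc 1 n = Finset.Ico 1 (n + 1) by rw [Finset.Ico_add_one_right_eq_Icc],
    Finset.prod_Ico_eq_prod_range]
  simp only [Nat.add_sub_cancel]
  refine Eq.trans (Finset.prod_congr rfl fun x _ => ?_) h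
  norm_num [add_comm 1 x]

lemma prod_sin_shift (m t : ℕ) (ht : t ∈ Finset.Icc 1 (m + 1)) :
    ∏ s ∈ Finset.Icc 1 (m + 1) \ {t}, |2 * Real.sin (Real.pi * ((s : ℝ) - (t : ℝ)) / (m + 1))|
      = (m + 1 : ℝ) := by
  refine Eq.trans ?_ (prod_sin m)
  simp only [Finset.mem_Icc] at ht
  refine Finset.prod_nbij' (fun s => if t < s then s - t else s + (m + 1) - t)
    (fun k => if k + t ≤ m + 1 then k + t else k + t - (m + 1)) ?_ ?_ ?_ ?_ ?_
  · intro s hs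
    simp only [Finset.mem_sdiff, Finset.mem_Icc, Finset.mem_singleton] at hs ⊢
    split <;> omega
  · intro k hk
    simp only [Finset.mem_sdiff, Finset.mem_Icc, Finset.mem_singleton] at hk ⊢
    split <;> omega
  · intro s hs
    simp only [Finset.mem_sdiff, Finset.mem_Icc, Finset.mem_singleton] at hs
    split <;> split <;> omega
  · intro k hk
    simp only [Finset.mem_Icc] at hk
    split <;> split <;> omega
  · intro s hs
    simp only [Finset.mem_sdiff, Finset.mem_Icc, Finset.mem_singleton] at hs
    rcases lt_or_gt_of_ne (fun h => hs.2 h) with hlt | hgt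
    · -- s < t
      rw [if_neg (by omega)]
      have hc : ((s + (m + 1) - t : ℕ) : ℝ) = (s : ℝ) - t + (m + 1) := by
        have h : t ≤ s + (m + 1) := by omega
        push_cast [h]
        ring
      rw [hc, show Real.pi * ((s : ℝ) - t + (m + 1)) / (m + 1)
            = Real.pi * ((s : ℝ) - t) / (m + 1) + Real.pi by
          field_simp,
        Real.sin_add_pi, mul_neg, abs_neg]
    · -- t < s
      rw [if_pos hgt]
      congr 2
      have h : t ≤ s := le_of_lt hgt
      push_cast [h]
      ring

/-- `s_{r,1}(g) = r^g` for all `r ≥ 1`, `g ≥ 1`. -/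
theorem verlinde_one_right (r g : ℕ) (hr : 1 ≤ r) (hg : 1 ≤ g) :
    verlinde r 1 g = (r : ℝ) ^ g := by
  obtain ⟨g, rfl⟩ : ∃ g', g = g' + 1 := ⟨g - 1, by omega⟩
  unfold verlinde
  have hcard : (Finset.Icc 1 (r + 1)).card = r + 1 := by
    rw [Nat.card_Icc]
    omega
  have hsum : ∑ S ∈ (Finset.Icc 1 (r + 1)).powersetCard r,
      ∏ s ∈ S, ∏ t ∈ Finset.Icc 1 (r + 1) \ S,
        |2 * Real.sin (Real.pi * ((s : ℝ) - (t : ℝ)) / (↑r + ↑(1:ℕ)))| ^ (g + 1 - 1)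
      = ∑ t ∈ Finset.Icc 1 (r + 1),
          ∏ s ∈ Finset.Icc 1 (r + 1) \ {t}, ∏ t' ∈ Finset.Icc 1 (r + 1) \ (Finset.Icc 1 (r + 1) \ {t}),
            |2 * Real.sin (Real.pi * ((s : ℝ) - (t' : ℝ)) / (↑r + ↑(1:ℕ)))| ^ (g + 1 - 1) := by
    refine (Finset.sum_nbij (fun t => Finset.Icc 1 (r + 1) \ {t}) ?_ ?_ ?_ ?_).symm
    · intro t ht
      rw [Finset.mem_powersetCard]
      refine ⟨Finset.sdiff_subset, ?_⟩
      rw [Finset.card_sdiff_of_subset (Finset.singleton_subset_iff.mpr ht), hcard, Finset.card_singleton]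
      omega
    · intro a ha b hb hab
      dsimp only at hab
      simp only [Finset.mem_coe] at ha hb
      by_contra hne
      have h1 : a ∈ Finset.Icc 1 (r + 1) \ {b} := by
        simp only [Finset.mem_sdiff, Finset.mem_singleton]
        exact ⟨ha, hne⟩
      rw [← hab] at h1
      simp at h1
    · intro S hS
      simp only [Finset.mem_coe, Finset.mem_powersetCard] at hS
      have hc : (Finset.Icc 1 (r + 1) \ S).card = 1 := by
        rw [Finset.card_sdiff_of_subset hS.1, hcard, hS.2]
        omega
      obtain ⟨a, ha⟩ := Finset.card_eq_one.mp hc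
      have haI : a ∈ Finset.Icc 1 (r + 1) := by
        have : a ∈ Finset.Icc 1 (r + 1) \ S := ha ▸ Finset.mem_singleton_self a
        exact (Finset.mem_sdiff.mp this).1
      refine ⟨a, haI, ?_⟩
      dsimp only
      rw [← ha, sdiff_sdiff_right_self]
      exact inf_eq_right.mpr hS.1
    · intro t ht
      rfl
  rw [hsum]
  have hterm : ∀ t ∈ Finset.Icc 1 (r + 1),
      ∏ s ∈ Finset.Icc 1 (r + 1) \ {t}, ∏ t' ∈ Finset.Icc 1 (r + 1) \ (Finset.Icc 1 (r + 1) \ {t}),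
        |2 * Real.sin (Real.pi * ((s : ℝ) - (t' : ℝ)) / (↑r + ↑(1:ℕ)))| ^ (g + 1 - 1)
      = ((r : ℝ) + 1) ^ g := by
    intro t ht
    have h1 : Finset.Icc 1 (r + 1) \ (Finset.Icc 1 (r + 1) \ {t}) = {t} := by
      rw [sdiff_sdiff_right_self]
      exact inf_eq_right.mpr (Finset.singleton_subset_iff.mpr ht)
    rw [h1]
    simp only [Finset.prod_singleton, Nat.add_sub_cancel]
    rw [Finset.prod_pow]
    have := prod_sin_shift r t ht
    rw [show ((r : ℝ) + ↑(1:ℕ)) = ((r : ℝ) + 1) by norm_num, this]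
  rw [Finset.sum_congr rfl hterm, Finset.sum_const, hcard, nsmul_eq_mul]
  have hne : ((r : ℝ) + 1) ≠ 0 := by positivity
  push_cast
  rw [div_pow]
  field_simp
  ring
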